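/- Let B be a ring and S a multiplicatively closed subset such that the associated category 𝒮 is filtered (i.e. (a) for all s,t ∈ S there exist x,y ∈ B with sx = ty ∈ S; (b) for all s ∈ S and x,y ∈ B with sx = sy ∈ S there exists z ∈ B with xz = yz and sxz ∈ S). Then for s ∈ S, left multiplication l_s : B|S → B|S on the module of right fractions is surjective if and only if for every b ∈ B the sets sB and bS intersect nontrivially (sB ∩ bS ≠ ∅). -/

import Mathlib

/-! STATEMENT 1: if the category 𝒮 associated to a multiplicatively closed set S
is filtered, then for s ∈ S, left multiplication by s on the module of right
fractions B|S is surjective iff sB ∩ bS ≠ ∅ for every b ∈ B. -/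

/-- The submodule of relations defining the module of right fractions. -/
noncomputable def fracRel (B : Type) [Ring B] (S : Set B) : Submodule B (↥S →₀ B) :=
  Submodule.span B { v | ∃ (s x : B) (hs : s ∈ S) (hsx : s * x ∈ S),
    v = Finsupp.single ⟨s * x, hsx⟩ x - Finsupp.single ⟨s, hs⟩ 1 }

/-- The left `B`-module `B|S` of right fractions with denominators in `S`. -/
abbrev Frac (B : Type) [Ring B] (S : Set B) : Type :=
  (↥S →₀ B) ⧸ fracRel B S

/-- The fraction `b|s`. -/
noncomputable def fracElt (B : Type) [Ring B] (S : Set B) (b s : B) (hs : s ∈ S) :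
    Frac B S :=
  Submodule.Quotient.mk (Finsupp.single ⟨s, hs⟩ b)

/-- A left `B`-module is `S`-local if every `s ∈ S` acts invertibly by left
multiplication. -/
def SLocal (B : Type) [Ring B] (S : Set B) (N : Type) [AddCommGroup N] [Module B N] :
    Prop :=
  ∀ s ∈ S, Function.Bijective (fun n : N => s • n)

section Helpers

variable {B : Type} [Ring B] {S : Set B}

theorem fracElt_congr (b : B) {s s' : B} (h : s = s') (hs : s ∈ S) (hs' : s' ∈ S) :
    fracElt B S b s hs = fracElt B S b s' hs' := by subst h; rfl

theorem fracElt_rel (b : B) {s x : B} (hs : s ∈ S) (hsx : s * x ∈ S) :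
    fracElt B S b s hs = fracElt B S (b * x) (s * x) hsx := by
  unfold fracElt
  rw [Submodule.Quotient.eq]
  have hgen : (Finsupp.single (⟨s * x, hsx⟩ : ↥S) x - Finsupp.single ⟨s, hs⟩ 1) ∈ fracRel B S :=
    Submodule.subset_span ⟨s, x, hs, hsx, rfl⟩
  have := (fracRel B S).smul_mem (-b) hgen
  have heq : (-b) • (Finsupp.single (⟨s * x, hsx⟩ : ↥S) x - Finsupp.single ⟨s, hs⟩ 1)
      = Finsupp.single (⟨s, hs⟩ : ↥S) b - Finsupp.single ⟨s * x, hsx⟩ (b * x) := by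
    rw [smul_sub, Finsupp.smul_single, Finsupp.smul_single]
    simp [neg_mul]
    abel
  rwa [heq] at this

theorem fracElt_add (a b w : B) (hw : w ∈ S) :
    fracElt B S a w hw + fracElt B S b w hw = fracElt B S (a + b) w hw := by
  unfold fracElt
  rw [← Submodule.Quotient.mk_add, ← Finsupp.single_add]

theorem fracElt_sub (a b w : B) (hw : w ∈ S) :
    fracElt B S a w hw - fracElt B S b w hw = fracElt B S (a - b) w hw := by
  unfold fracElt
  rw [← Submodule.Quotient.mk_sub, ← Finsupp.single_sub]

theorem smul_fracElt (r b w : B) (hw : w ∈ S) :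
    r • fracElt B S b w hw = fracElt B S (r * b) w hw := by
  unfold fracElt
  rw [← Submodule.Quotient.mk_smul, Finsupp.smul_single, smul_eq_mul]

theorem frac_repr (h1 : (1 : B) ∈ S)
    (hfilt1 : ∀ s ∈ S, ∀ t ∈ S, ∃ x y : B, s * x = t * y ∧ s * x ∈ S)
    (m : Frac B S) : ∃ b t, ∃ ht : t ∈ S, m = fracElt B S b t ht := by
  obtain ⟨f, rfl⟩ := Submodule.Quotient.mk_surjective _ m
  induction f using Finsupp.induction with
  | zero => exact ⟨0, 1, h1, by simp [fracElt]⟩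
  | single_add a b f _ _ ih =>
    obtain ⟨c, u, hu, hc⟩ := ih
    obtain ⟨x, y, hxy, hx⟩ := hfilt1 a.1 a.2 u hu
    have hy : u * y ∈ S := hxy ▸ hx
    refine ⟨b * x + c * y, a.1 * x, hx, ?_⟩
    have hmk : (Submodule.Quotient.mk (Finsupp.single a b + f) : Frac B S)
        = fracElt B S b a.1 a.2 + Submodule.Quotient.mk f := by
      unfold fracElt
      rw [← Submodule.Quotient.mk_add]
    rw [hmk, hc, fracElt_rel b a.2 hx, fracElt_rel c hu hy,
      fracElt_congr (c * y) hxy.symm hy hx, fracElt_add]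

theorem equalize
    (hfilt2 : ∀ s ∈ S, ∀ x y : B, s * x = s * y → s * x ∈ S →
        ∃ z : B, x * z = y * z ∧ s * x * z ∈ S)
    (F : Finset ↥S) (t : B) (ht : t ∈ S) (x₁ x₂ : ↥S → B)
    (h : ∀ p ∈ F, (p : B) * x₁ p = t ∧ (p : B) * x₂ p = t) :
    ∃ z, t * z ∈ S ∧ ∀ p ∈ F, x₁ p * z = x₂ p * z := by
  classical
  induction F using Finset.induction_on with
  | empty => exact ⟨1, by simpa using ht, by simp⟩
  | @insert p F hp ih =>
    obtain ⟨z₀, hz₀S, hz₀⟩ := ih (fun q hq => h q (Finset.mem_insert_of_mem hq))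
    obtain ⟨h1p, h2p⟩ := h p (Finset.mem_insert_self p F)
    have e1 : (p : B) * (x₁ p * z₀) = t * z₀ := by rw [← mul_assoc, h1p]
    have e2 : (p : B) * (x₂ p * z₀) = t * z₀ := by rw [← mul_assoc, h2p]
    have hmem : (p : B) * (x₁ p * z₀) ∈ S := by rw [e1]; exact hz₀S
    obtain ⟨w, hw, hwS⟩ := hfilt2 (p : B) p.2 (x₁ p * z₀) (x₂ p * z₀) (by rw [e1, e2]) hmem
    refine ⟨z₀ * w, ?_, ?_⟩
    · have : t * (z₀ * w) = (p : B) * (x₁ p * z₀) * w := by rw [e1, mul_assoc]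
      rw [this]; exact hwS
    · intro q hq
      rcases Finset.mem_insert.1 hq with rfl | hq
      · rw [← mul_assoc, ← mul_assoc]; exact hw
      · rw [← mul_assoc, ← mul_assoc, hz₀ q hq]

/-- `f` maps to zero "at a finite stage" -/
def Killed (f : ↥S →₀ B) : Prop :=
  ∃ t, t ∈ S ∧ ∃ x : ↥S → B,
    (∀ p ∈ f.support, (p : B) * x p = t) ∧ ∑ p ∈ f.support, f p * x p = 0

theorem killed_zero (h1 : (1 : B) ∈ S) : Killed (0 : ↥S →₀ B) :=
  ⟨1, h1, fun _ => 1, by simp, by simp⟩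

theorem killed_smul (c : B) {f : ↥S →₀ B} (hf : Killed f) : Killed (c • f) := by
  classical
  obtain ⟨t, ht, x, hx, hsum⟩ := hf
  refine ⟨t, ht, x, fun p hp => hx p (Finsupp.support_smul hp), ?_⟩
  have h1 : ∑ p ∈ (c • f).support, (c • f) p * x p = ∑ p ∈ f.support, (c • f) p * x p :=
    Finset.sum_subset Finsupp.support_smul (fun p _ hp => by
      rw [Finsupp.notMem_support_iff.1 hp, zero_mul])
  rw [h1]
  calc ∑ p ∈ f.support, (c • f) p * x p = c * ∑ p ∈ f.support, f p * x p := by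
        rw [Finset.mul_sum]
        exact Finset.sum_congr rfl fun p _ => by
          rw [Finsupp.smul_apply, smul_eq_mul, mul_assoc]
    _ = 0 := by rw [hsum, mul_zero]

theorem killed_add
    (hfilt1 : ∀ s ∈ S, ∀ t ∈ S, ∃ x y : B, s * x = t * y ∧ s * x ∈ S)
    (hfilt2 : ∀ s ∈ S, ∀ x y : B, s * x = s * y → s * x ∈ S →
        ∃ z : B, x * z = y * z ∧ s * x * z ∈ S)
    {f g : ↥S →₀ B} (hf : Killed f) (hg : Killed g) : Killed (f + g) := by
  classical
  obtain ⟨tf, htf, xf, hxf, hsf⟩ := hf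
  obtain ⟨tg, htg, xg, hxg, hsg⟩ := hg
  obtain ⟨a, c, hac, haS⟩ := hfilt1 tf htf tg htg
  obtain ⟨z, hzS, hz⟩ := equalize hfilt2 (f.support ∩ g.support) (tf * a) haS
      (fun p => xf p * a) (fun p => xg p * c) (fun p hp => by
        obtain ⟨hpf, hpg⟩ := Finset.mem_inter.1 hp
        constructor
        · rw [← mul_assoc, hxf p hpf]
        · rw [← mul_assoc, hxg p hpg, ← hac])
  set x : ↥S → B := fun p => if p ∈ f.support then xf p * a * z else xg p * c * z with hxdef
  have hsupp : (f + g).support ⊆ f.support ∪ g.support := Finsupp.support_add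
  refine ⟨tf * a * z, hzS, x, ?_, ?_⟩
  · intro p hp
    rcases Finset.mem_union.1 (hsupp hp) with hpf | hpg
    · rw [hxdef]; simp only [if_pos hpf]
      rw [← mul_assoc, ← mul_assoc, hxf p hpf]
    · by_cases hpf : p ∈ f.support
      · rw [hxdef]; simp only [if_pos hpf]
        rw [← mul_assoc, ← mul_assoc, hxf p hpf]
      · rw [hxdef]; simp only [if_neg hpf]
        rw [← mul_assoc, ← mul_assoc, hxg p hpg, ← hac]
  · -- key pointwise facts
    have hxpf : ∀ p ∈ f.support, x p = xf p * a * z := fun p hp => by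
      rw [hxdef]; simp only [if_pos hp]
    have hxpg : ∀ p ∈ g.support, x p = xg p * c * z := by
      intro p hp
      by_cases hpf : p ∈ f.support
      · rw [hxdef]; simp only [if_pos hpf]
        exact hz p (Finset.mem_inter.2 ⟨hpf, hp⟩)
      · rw [hxdef]; simp only [if_neg hpf]
    have hext : ∑ p ∈ (f + g).support, (f + g) p * x p
        = ∑ p ∈ f.support ∪ g.support, (f + g) p * x p :=
      Finset.sum_subset hsupp (fun p _ hp => by
        rw [Finsupp.notMem_support_iff.1 hp, zero_mul])
    rw [hext]
    have hsplit : ∑ p ∈ f.support ∪ g.support, (f + g) p * x p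
        = (∑ p ∈ f.support ∪ g.support, f p * x p)
          + ∑ p ∈ f.support ∪ g.support, g p * x p := by
      rw [← Finset.sum_add_distrib]
      exact Finset.sum_congr rfl fun p _ => by
        rw [Finsupp.add_apply, add_mul]
    rw [hsplit]
    have hfz : ∑ p ∈ f.support ∪ g.support, f p * x p = 0 := by
      have : ∑ p ∈ f.support ∪ g.support, f p * x p = ∑ p ∈ f.support, f p * x p :=
        (Finset.sum_subset Finset.subset_union_left (fun p _ hp => by
          rw [Finsupp.notMem_support_iff.1 hp, zero_mul])).symm
      rw [this]
      calc ∑ p ∈ f.support, f p * x p = (∑ p ∈ f.support, f p * xf p) * (a * z) := by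
            rw [Finset.sum_mul]
            exact Finset.sum_congr rfl fun p hp => by
              rw [hxpf p hp, mul_assoc, mul_assoc]
        _ = 0 := by rw [hsf, zero_mul]
    have hgz : ∑ p ∈ f.support ∪ g.support, g p * x p = 0 := by
      have : ∑ p ∈ f.support ∪ g.support, g p * x p = ∑ p ∈ g.support, g p * x p :=
        (Finset.sum_subset Finset.subset_union_right (fun p _ hp => by
          rw [Finsupp.notMem_support_iff.1 hp, zero_mul])).symm
      rw [this]
      calc ∑ p ∈ g.support, g p * x p = (∑ p ∈ g.support, g p * xg p) * (c * z) := by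
            rw [Finset.sum_mul]
            exact Finset.sum_congr rfl fun p hp => by
              rw [hxpg p hp, mul_assoc, mul_assoc]
        _ = 0 := by rw [hsg, zero_mul]
    rw [hfz, hgz, add_zero]

theorem sum_single_eq (q : ↥S) (v : B) (y : ↥S → B) :
    ∑ p ∈ (Finsupp.single q v).support, (Finsupp.single q v) p * y p = v * y q := by
  classical
  by_cases hv : v = 0
  · simp [hv]
  · rw [Finsupp.support_single_ne_zero _ hv]
    simp

theorem killed_gen
    (hfilt2 : ∀ s ∈ S, ∀ x y : B, s * x = s * y → s * x ∈ S →
        ∃ z : B, x * z = y * z ∧ s * x * z ∈ S)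
    {s x : B} (hs : s ∈ S) (hsx : s * x ∈ S) :
    Killed (Finsupp.single (⟨s * x, hsx⟩ : ↥S) x - Finsupp.single ⟨s, hs⟩ 1) := by
  classical
  by_cases heq : s * x = s
  · have hps : (⟨s * x, hsx⟩ : ↥S) = ⟨s, hs⟩ := Subtype.ext heq
    rw [hps, ← Finsupp.single_sub]
    obtain ⟨z, hz, hzS⟩ := hfilt2 s hs x 1 (by rw [mul_one, heq]) hsx
    refine ⟨s * x * z, hzS, fun _ => z, ?_, ?_⟩
    · intro p hp
      have hp' : p = ⟨s, hs⟩ := Finset.mem_singleton.1 (Finsupp.support_single_subset hp)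
      rw [hp']
      show s * z = s * x * z
      rw [heq]
    · rw [sum_single_eq, sub_mul, hz, one_mul, sub_self]
  · have hne : (⟨s * x, hsx⟩ : ↥S) ≠ ⟨s, hs⟩ := fun h => heq (congrArg Subtype.val h)
    set v := Finsupp.single (⟨s * x, hsx⟩ : ↥S) x - Finsupp.single (⟨s, hs⟩ : ↥S) 1 with hv
    set y : ↥S → B := fun p => if p = (⟨s * x, hsx⟩ : ↥S) then 1 else x with hy
    have hsupp : v.support ⊆ {(⟨s * x, hsx⟩ : ↥S), ⟨s, hs⟩} := by
      refine subset_trans Finsupp.support_sub ?_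
      refine Finset.union_subset ?_ ?_
      · exact subset_trans Finsupp.support_single_subset (by simp)
      · exact subset_trans Finsupp.support_single_subset (by simp)
    refine ⟨s * x, hsx, y, ?_, ?_⟩
    · intro p hp
      rcases Finset.mem_insert.1 (hsupp hp) with rfl | hp2
      · simp [hy]
      · rw [Finset.mem_singleton.1 hp2]
        simp [hy, hne.symm]
    · have hv1 : v (⟨s * x, hsx⟩ : ↥S) = x := by
        rw [hv, Finsupp.sub_apply, Finsupp.single_eq_same, Finsupp.single_eq_of_ne' hne.symm,
          sub_zero]
      have hv2 : v (⟨s, hs⟩ : ↥S) = -1 := by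
        rw [hv, Finsupp.sub_apply, Finsupp.single_eq_same, Finsupp.single_eq_of_ne' hne,
          zero_sub]
      have hext : ∑ p ∈ v.support, v p * y p
          = ∑ p ∈ ({(⟨s * x, hsx⟩ : ↥S), ⟨s, hs⟩} : Finset ↥S), v p * y p :=
        Finset.sum_subset hsupp (fun p _ hp => by
          rw [Finsupp.notMem_support_iff.1 hp, zero_mul])
      rw [hext, Finset.sum_pair hne, hv1, hv2]
      simp [hy, hne.symm]

def killedSubmodule (h1 : (1 : B) ∈ S)
    (hfilt1 : ∀ s ∈ S, ∀ t ∈ S, ∃ x y : B, s * x = t * y ∧ s * x ∈ S)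
    (hfilt2 : ∀ s ∈ S, ∀ x y : B, s * x = s * y → s * x ∈ S →
        ∃ z : B, x * z = y * z ∧ s * x * z ∈ S) : Submodule B (↥S →₀ B) where
  carrier := { g | Killed g }
  zero_mem' := killed_zero h1
  add_mem' := killed_add hfilt1 hfilt2
  smul_mem' := fun c _ hf => killed_smul c hf

theorem fracRel_killed (h1 : (1 : B) ∈ S)
    (hfilt1 : ∀ s ∈ S, ∀ t ∈ S, ∃ x y : B, s * x = t * y ∧ s * x ∈ S)
    (hfilt2 : ∀ s ∈ S, ∀ x y : B, s * x = s * y → s * x ∈ S →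
        ∃ z : B, x * z = y * z ∧ s * x * z ∈ S)
    {f : ↥S →₀ B} (hf : f ∈ fracRel B S) : Killed f := by
  have hle : fracRel B S ≤ killedSubmodule h1 hfilt1 hfilt2 := by
    apply Submodule.span_le.2
    rintro v ⟨s, x, hs, hsx, rfl⟩
    exact killed_gen hfilt2 hs hsx
  exact hle hf

theorem fracElt_eq_zero (h1 : (1 : B) ∈ S)
    (hfilt1 : ∀ s ∈ S, ∀ t ∈ S, ∃ x y : B, s * x = t * y ∧ s * x ∈ S)
    (hfilt2 : ∀ s ∈ S, ∀ x y : B, s * x = s * y → s * x ∈ S →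
        ∃ z : B, x * z = y * z ∧ s * x * z ∈ S)
    {d u : B} (hu : u ∈ S) (h : fracElt B S d u hu = 0) :
    ∃ x, d * x = 0 ∧ u * x ∈ S := by
  classical
  have hf : (Finsupp.single (⟨u, hu⟩ : ↥S) d) ∈ fracRel B S := by
    rwa [fracElt, Submodule.Quotient.mk_eq_zero] at h
  obtain ⟨t, ht, x, hx, hsum⟩ := fracRel_killed h1 hfilt1 hfilt2 hf
  by_cases hd : d = 0
  · exact ⟨1, by rw [hd, zero_mul], by rwa [mul_one]⟩
  · refine ⟨x ⟨u, hu⟩, ?_, ?_⟩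
    · rw [← sum_single_eq (⟨u, hu⟩ : ↥S) d x]
      exact hsum
    · have hmem : (⟨u, hu⟩ : ↥S) ∈ (Finsupp.single (⟨u, hu⟩ : ↥S) d).support := by
        rw [Finsupp.support_single_ne_zero _ hd]
        exact Finset.mem_singleton_self _
      have := hx _ hmem
      rw [show ((⟨u, hu⟩ : ↥S) : B) = u from rfl] at this
      rw [this]
      exact ht


end Helpers

theorem statement1 (B : Type) [Ring B] (S : Set B)
    (h1 : (1 : B) ∈ S) (hmul : ∀ s ∈ S, ∀ t ∈ S, s * t ∈ S)
    -- filteredness of the category 𝒮 :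
    (hfilt1 : ∀ s ∈ S, ∀ t ∈ S, ∃ x y : B, s * x = t * y ∧ s * x ∈ S)
    (hfilt2 : ∀ s ∈ S, ∀ x y : B, s * x = s * y → s * x ∈ S →
        ∃ z : B, x * z = y * z ∧ s * x * z ∈ S)
    (s : B) (hs : s ∈ S) :
    Function.Surjective (fun m : Frac B S => s • m) ↔
      ∀ b : B, ∃ c : B, ∃ u ∈ S, s * c = b * u := by
  constructor
  · intro hsurj b
    obtain ⟨m, hm⟩ := hsurj (fracElt B S b 1 h1)
    obtain ⟨c, u, hu, rfl⟩ := frac_repr h1 hfilt1 m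
    simp only [] at hm
    rw [smul_fracElt] at hm
    have h1u : 1 * u ∈ S := by rwa [one_mul]
    have hbu : fracElt B S b 1 h1 = fracElt B S (b * u) u hu := by
      rw [fracElt_rel b h1 h1u]
      exact fracElt_congr _ (one_mul u) h1u hu
    have hz : fracElt B S (s * c - b * u) u hu = 0 := by
      rw [← fracElt_sub, hm, hbu, sub_self]
    obtain ⟨x, hx0, hxS⟩ := fracElt_eq_zero h1 hfilt1 hfilt2 hu hz
    refine ⟨c * x, u * x, hxS, ?_⟩
    have : (s * c - b * u) * x = 0 := hx0
    rw [sub_mul] at this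
    have := sub_eq_zero.1 this
    rw [← mul_assoc, ← mul_assoc, this]
  · intro h m
    obtain ⟨b, t, ht, rfl⟩ := frac_repr h1 hfilt1 m
    obtain ⟨c, u, hu, hcu⟩ := h b
    have htu : t * u ∈ S := hmul t ht u hu
    refine ⟨fracElt B S c (t * u) htu, ?_⟩
    simp only []
    rw [smul_fracElt, hcu]
    exact (fracElt_rel b ht htu).symm
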